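/- Let K, u > 0, let G be a directed bipartite graph on [n]⊔[n] with i←j only if i→j, let m ≤ n, and let φ: [n]→[m] be a u-light (G,K)-admissible mapping, meaning additionally that for each right vertex j, the number of left vertices i ∈ ∂_in(j) with |φ^{-1}(φ(i))| = 2 is at most u. Suppose that for some δ, ε > 0, |∂_in(I)| ≥ Σ_{i∈I} |∂_in(i)| − εK|I| for every set I of right vertices with |I| ≤ δn. Then in the compressed graph φ(G), |∂_in^φ(I)| ≥ Σ_{i∈I} |∂_in^φ(i)| − (εK + u)|I| for every set I of right vertices with |I| ≤ δn. -/

import Mathlib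

/-- a `u`-light `(G,K)`-admissible compression preserves the expansion
property of in-neighborhoods, with `εK` degraded to `εK + u`.  Encoding as in the other
statements: `G` lives on `[n] ⊔ [n]`; for a right vertex `j`, `∂_in(j) = {i | toE i j}`,
and for a left vertex `i`, `∂_out(i) = {j | fromE i j}`.  In the compressed graph,
`∂_in^φ(S) = φ '' ∂_in(S)`.  `φ` is `(G,K)`-admissible (surjective, preimages of size at
most two, glued left vertices with disjoint out-neighborhoods contained in `T_{K,∞}(G)`,
where `T` is the type family of `G` at parameter `K`) and `u`-light: for each right
vertex `j`, at most `u` in-neighbors of `j` are glued by `φ`. -/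

private lemma ncard_biUnion_le' {α β : Type*} [Fintype β] (I : Finset α) (A : α → Set β) :
    (⋃ j ∈ I, A j).ncard ≤ ∑ j ∈ I, (A j).ncard := by
  classical
  induction I using Finset.induction_on with
  | empty => simp
  | insert a s hj ih =>
    rw [Finset.sum_insert hj]
    rw [Finset.set_biUnion_insert]
    exact le_trans (Set.ncard_union_le _ _) (by omega)

theorem stmt3 (n m : ℕ) (hm : m ≤ n) (toE fromE : Fin n → Fin n → Prop)
    (hsub : ∀ i j, fromE i j → toE i j)
    (K u : ℝ) (hK : 0 < K) (hu : 0 < u) (φ : Fin n → Fin m)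
    (T : ℕ → Set (Fin n))
    (hT : ∀ ℓ, 1 ≤ ℓ → T ℓ = {j | (∀ h ∈ Set.Ico 1 ℓ, j ∉ T h) ∧
      ((Set.ncard ({i | fromE i j} \
        {i | ∃ j' ∈ ⋃ h ∈ Set.Ico 1 ℓ, T h, toE i j'}) : ℝ) ≤ K)})
    (hsurj : Function.Surjective φ)
    (hpre : ∀ i' : Fin m, (φ ⁻¹' {i'}).ncard ≤ 2)
    (hglue : ∀ i₁ i₂ : Fin n, i₁ ≠ i₂ → φ i₁ = φ i₂ →
      ({j | fromE i₁ j} ∩ {j | fromE i₂ j} = ∅) ∧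
      ({j | fromE i₁ j} ∪ {j | fromE i₂ j} ⊆ {j | ∀ ℓ, 1 ≤ ℓ → j ∉ T ℓ}))
    (hlight : ∀ j : Fin n,
      ((Set.ncard {i | toE i j ∧ (φ ⁻¹' {φ i}).ncard = 2} : ℝ) ≤ u))
    (δ ε : ℝ) (hδ : 0 < δ) (hε : 0 < ε)
    (hexp : ∀ I : Finset (Fin n), (I.card : ℝ) ≤ δ * n →
      (∑ i ∈ I, (Set.ncard {i' | toE i' i} : ℝ)) - ε * K * I.card ≤
        (Set.ncard {i' | ∃ j ∈ I, toE i' j} : ℝ)) :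
    ∀ I : Finset (Fin n), (I.card : ℝ) ≤ δ * n →
      (∑ i ∈ I, (Set.ncard (φ '' {i' | toE i' i}) : ℝ)) - (ε * K + u) * I.card ≤
        (Set.ncard (φ '' {i' | ∃ j ∈ I, toE i' j}) : ℝ) := by
  intro I hI
  classical
  set Gl : Set (Fin n) := {i | (φ ⁻¹' {φ i}).ncard = 2} with hGldef
  set S : Set (Fin n) := {i' | ∃ j ∈ I, toE i' j} with hSdef
  have hinj : Set.InjOn φ (S \ Gl) := by
    intro a ha b hb hab
    by_contra hne
    have h2 : 2 ≤ (φ ⁻¹' {φ a}).ncard := by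
      have hsub2 : ({a, b} : Set (Fin n)) ⊆ φ ⁻¹' {φ a} := by
        intro x hx
        rcases hx with rfl | hx
        · rfl
        · simp only [Set.mem_singleton_iff] at hx
          subst hx
          simp only [Set.mem_preimage, Set.mem_singleton_iff]
          exact hab.symm
      calc 2 = ({a, b} : Set (Fin n)).ncard := (Set.ncard_pair hne).symm
        _ ≤ _ := Set.ncard_le_ncard hsub2 (Set.toFinite _)
    have := hpre (φ a)
    have hGla : a ∈ Gl := by
      simp only [hGldef, Set.mem_setOf_eq]
      omega
    exact ha.2 hGla
  have key : S.ncard ≤ (φ '' S).ncard + (S ∩ Gl).ncard := by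
    have h1 : (S \ Gl).ncard = (φ '' (S \ Gl)).ncard :=
      (Set.ncard_image_of_injOn hinj).symm
    have h2 : (φ '' (S \ Gl)).ncard ≤ (φ '' S).ncard :=
      Set.ncard_le_ncard (Set.image_mono Set.diff_subset) (Set.toFinite _)
    have h3 := Set.ncard_inter_add_ncard_diff_eq_ncard S Gl (Set.toFinite _)
    omega
  have hsubU : S ∩ Gl ⊆ ⋃ j ∈ I, {i | toE i j ∧ (φ ⁻¹' {φ i}).ncard = 2} := by
    rintro x ⟨⟨j, hj, hx⟩, hg⟩
    exact Set.mem_biUnion hj ⟨hx, hg⟩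
  have hcount : ((S ∩ Gl).ncard : ℝ) ≤ u * I.card := by
    have h1 : (S ∩ Gl).ncard ≤ ∑ j ∈ I, ({i | toE i j ∧ (φ ⁻¹' {φ i}).ncard = 2}).ncard :=
      le_trans (Set.ncard_le_ncard hsubU (Set.toFinite _)) (ncard_biUnion_le' I _)
    calc ((S ∩ Gl).ncard : ℝ)
        ≤ ∑ j ∈ I, (({i | toE i j ∧ (φ ⁻¹' {φ i}).ncard = 2}).ncard : ℝ) := by
          exact_mod_cast le_trans (Nat.cast_le.mpr h1) (le_of_eq (Nat.cast_sum _ _))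
      _ ≤ ∑ j ∈ I, u := Finset.sum_le_sum fun j _ => hlight j
      _ = u * I.card := by rw [Finset.sum_const, nsmul_eq_mul, mul_comm]
  have himg : ∀ j : Fin n,
      ((φ '' {i' | toE i' j}).ncard : ℝ) ≤ (({i' | toE i' j}).ncard : ℝ) := by
    intro j
    exact_mod_cast Set.ncard_image_le (Set.toFinite _)
  have hkey' : (S.ncard : ℝ) ≤ ((φ '' S).ncard : ℝ) + ((S ∩ Gl).ncard : ℝ) := by
    exact_mod_cast key
  have hexpI := hexp I hI
  calc (∑ i ∈ I, ((φ '' {i' | toE i' i}).ncard : ℝ)) - (ε * K + u) * I.card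
      ≤ (∑ i ∈ I, (({i' | toE i' i}).ncard : ℝ)) - (ε * K + u) * I.card := by
        have := Finset.sum_le_sum fun j (_ : j ∈ I) => himg j
        linarith
    _ = (∑ i ∈ I, (({i' | toE i' i}).ncard : ℝ)) - ε * K * I.card - u * I.card := by ring
    _ ≤ (S.ncard : ℝ) - u * I.card := by rw [hSdef]; linarith
    _ ≤ ((φ '' S).ncard : ℝ) := by linarith
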